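/- Uniqueness for the Dirichlet problem: let 0 < α < 1, h > 0, j₀ < j₁. If u, v : ℤ → ℝ are bounded, (δ_right)^α u = (δ_right)^α v on [j₀, j₁), and u = v on [j₁, ∞), then u = v on [j₀, ∞). -/

import Mathlib

open Real

/-- The generalized binomial coefficient `(α choose m) = α(α−1)⋯(α−m+1)/m!`. -/
noncomputable def rchoose (α : ℝ) (m : ℕ) : ℝ :=
  (∏ i ∈ Finset.range m, (α - i)) / (m.factorial : ℝ)

/-- The kernel `Λ^α(m) = (−1)^m (α choose m)`. -/
noncomputable def Lam (α : ℝ) (m : ℕ) : ℝ := (-1) ^ m * rchoose α m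

/-- The fractional discrete derivative on the mesh `ℤ_h`:
`(δ_right)^α u(n) = h^{-α} ∑_{m=0}^∞ Λ^α(m) u(n+m)`. -/
noncomputable def deltaRightPow (α h : ℝ) (u : ℤ → ℝ) (n : ℤ) : ℝ :=
  h ^ (-α) * ∑' m : ℕ, Lam α m * u (n + (m : ℤ))

lemma Lam_zero (α : ℝ) : Lam α 0 = 1 := by
  simp [Lam, rchoose]

lemma rchoose_pascal (α : ℝ) (m : ℕ) :
    rchoose α (m + 1) = rchoose (α - 1) (m + 1) + rchoose (α - 1) m := by
  have h1 : ∏ i ∈ Finset.range (m + 1), (α - i) =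
      α * ∏ i ∈ Finset.range m, (α - 1 - i) := by
    rw [Finset.prod_range_succ']
    simp only [Nat.cast_add, Nat.cast_one, Nat.cast_zero, sub_zero]
    rw [mul_comm]
    congr 1
    exact Finset.prod_congr rfl fun i _ => by ring
  have h2 : ∏ i ∈ Finset.range (m + 1), (α - 1 - i) =
      (∏ i ∈ Finset.range m, (α - 1 - i)) * (α - 1 - m) := Finset.prod_range_succ _ _
  have hm : ((m + 1).factorial : ℝ) = (m + 1) * m.factorial := by
    rw [Nat.factorial_succ]; push_cast; ring
  have hf : (m.factorial : ℝ) ≠ 0 := Nat.cast_ne_zero.mpr m.factorial_ne_zero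
  have hf1 : ((m:ℝ) + 1) ≠ 0 := by positivity
  rw [rchoose, rchoose, rchoose, h1, h2, hm]
  field_simp
  ring

lemma Lam_sum (α : ℝ) (N : ℕ) :
    ∑ m ∈ Finset.range (N + 1), Lam α m = Lam (α - 1) N := by
  induction N with
  | zero => simp [Lam, rchoose]
  | succ K ih =>
      rw [Finset.sum_range_succ, ih, Lam, Lam, Lam, rchoose_pascal, pow_succ]
      ring

lemma Lam_sub_one_eq (α : ℝ) (N : ℕ) :
    Lam (α - 1) N = (∏ i ∈ Finset.range N, ((i : ℝ) + 1 - α)) / (N.factorial : ℝ) := by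
  rw [Lam, rchoose, ← mul_div_assoc]
  congr 1
  rw [show ((-1 : ℝ)) ^ N = ∏ _i ∈ Finset.range N, (-1 : ℝ) by simp,
    ← Finset.prod_mul_distrib]
  exact Finset.prod_congr rfl fun i _ => by ring

lemma Lam_sub_one_nonneg (α : ℝ) (hα1 : α < 1) (N : ℕ) : 0 ≤ Lam (α - 1) N := by
  rw [Lam_sub_one_eq]
  apply div_nonneg
  · apply Finset.prod_nonneg
    intro i _
    have : (0:ℝ) ≤ i := Nat.cast_nonneg i
    linarith
  · positivity

lemma Lam_nonpos (α : ℝ) (hα : 0 < α) (hα1 : α < 1) (m : ℕ) : Lam α (m + 1) ≤ 0 := by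
  have h1 : ∏ i ∈ Finset.range (m + 1), (α - i) =
      α * ∏ i ∈ Finset.range m, (α - 1 - i) := by
    rw [Finset.prod_range_succ']
    simp only [Nat.cast_add, Nat.cast_one, Nat.cast_zero, sub_zero]
    rw [mul_comm]
    congr 1
    exact Finset.prod_congr rfl fun i _ => by ring
  have h2 : (-1 : ℝ) ^ m * ∏ i ∈ Finset.range m, (α - 1 - i) =
      ∏ i ∈ Finset.range m, ((i : ℝ) + 1 - α) := by
    rw [show ((-1 : ℝ)) ^ m = ∏ _i ∈ Finset.range m, (-1 : ℝ) by simp,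
      ← Finset.prod_mul_distrib]
    exact Finset.prod_congr rfl fun i _ => by ring
  have hprod : 0 ≤ ∏ i ∈ Finset.range m, ((i : ℝ) + 1 - α) := by
    apply Finset.prod_nonneg
    intro i _
    have : (0:ℝ) ≤ i := Nat.cast_nonneg i
    linarith
  have key : Lam α (m + 1) =
      (-(α * ∏ i ∈ Finset.range m, ((i : ℝ) + 1 - α))) / ((m+1).factorial : ℝ) := by
    rw [Lam, rchoose, h1, ← mul_div_assoc]
    congr 1
    rw [show (-1 : ℝ) ^ (m + 1) * (α * ∏ i ∈ Finset.range m, (α - 1 - i)) =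
      -(α * ((-1 : ℝ) ^ m * ∏ i ∈ Finset.range m, (α - 1 - i))) by ring, h2]
  rw [key]
  apply div_nonpos_of_nonpos_of_nonneg
  · nlinarith
  · positivity

lemma Lam_abs_summable (α : ℝ) (hα : 0 < α) (hα1 : α < 1) :
    Summable (fun m : ℕ => |Lam α m|) := by
  apply summable_of_sum_range_le (c := 2) (fun n => abs_nonneg _)
  intro n
  match n with
  | 0 => norm_num
  | (K + 1) =>
    have habs : ∀ m ∈ Finset.range K, |Lam α (m + 1)| = - Lam α (m + 1) := by
      intro m _
      exact abs_of_nonpos (Lam_nonpos α hα hα1 m)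
    rw [Finset.sum_range_succ']
    rw [Finset.sum_congr rfl habs, Lam_zero, abs_one]
    have hsum : ∑ m ∈ Finset.range K, Lam α (m + 1) = Lam (α - 1) K - 1 := by
      have := Lam_sum α K
      rw [Finset.sum_range_succ'] at this
      rw [Lam_zero] at this
      linarith
    rw [Finset.sum_neg_distrib, hsum]
    have := Lam_sub_one_nonneg α hα1 K
    linarith

lemma series_summable (α : ℝ) (hα : 0 < α) (hα1 : α < 1) (f : ℤ → ℝ) (C : ℝ)
    (hf : ∀ n, |f n| ≤ C) (j : ℤ) :
    Summable (fun m : ℕ => Lam α m * f (j + (m : ℤ))) := by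
  apply Summable.of_abs
  have hs : Summable (fun m : ℕ => |Lam α m| * C) :=
    (Lam_abs_summable α hα hα1).mul_right C
  exact Summable.of_nonneg_of_le (fun m => abs_nonneg _)
    (fun m => by rw [abs_mul]; exact mul_le_mul_of_nonneg_left (hf _) (abs_nonneg _)) hs

/-- Uniqueness for the Dirichlet problem for the fractional discrete derivative. -/
theorem dirichlet_uniqueness (α h : ℝ) (hα : 0 < α) (hα1 : α < 1) (hh : 0 < h)
    (j₀ j₁ : ℤ) (hj : j₀ < j₁) (u v : ℤ → ℝ) (M : ℝ)
    (hu : ∀ n, |u n| ≤ M) (hv : ∀ n, |v n| ≤ M)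
    (hfrac : ∀ j, j₀ ≤ j → j < j₁ → deltaRightPow α h u j = deltaRightPow α h v j)
    (htail : ∀ j, j₁ ≤ j → u j = v j) :
    ∀ j, j₀ ≤ j → u j = v j := by
  have hpow : (0:ℝ) < h ^ (-α) := Real.rpow_pos_of_pos hh _
  have key : ∀ j, j₀ ≤ j → j < j₁ →
      ∑' m : ℕ, Lam α m * (u (j + (m:ℤ)) - v (j + (m:ℤ))) = 0 := by
    intro j hj0 hj1
    have h1 := hfrac j hj0 hj1
    rw [deltaRightPow, deltaRightPow] at h1
    have h2 : ∑' m : ℕ, Lam α m * u (j + (m:ℤ)) =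
        ∑' m : ℕ, Lam α m * v (j + (m:ℤ)) := by
      exact mul_left_cancel₀ (ne_of_gt hpow) h1
    have hsu := series_summable α hα hα1 u M hu j
    have hsv := series_summable α hα hα1 v M hv j
    have := Summable.tsum_sub hsu hsv
    rw [h2, sub_self] at this
    rw [← this]
    apply tsum_congr
    intro m
    ring
  have main : ∀ k : ℕ, ∀ j : ℤ, j₀ ≤ j → j₁ - k ≤ j → u j = v j := by
    intro k
    induction k with
    | zero => intro j _ hjk; exact htail j (by simpa using hjk)
    | succ K ih =>
        intro j hj0 hjk
        by_cases hc : j₁ ≤ j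
        · exact htail j hc
        push_neg at hc
        have hts := key j hj0 hc
        have hzero : ∀ m : ℕ, m ≠ 0 → Lam α m * (u (j + (m:ℤ)) - v (j + (m:ℤ))) = 0 := by
          intro m hm
          have h1 : (1:ℤ) ≤ m := by exact_mod_cast Nat.one_le_iff_ne_zero.mpr hm
          have heq : u (j + (m:ℤ)) = v (j + (m:ℤ)) := by
            apply ih (j + m) (by omega) (by push_cast at hjk ⊢; omega)
          rw [heq, sub_self, mul_zero]
        rw [tsum_eq_single 0 hzero] at hts
        simp only [Lam_zero, Nat.cast_zero, add_zero, one_mul] at hts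
        linarith
  intro j hj0
  apply main (j₁ - j₀).toNat j hj0
  have : ((j₁ - j₀).toNat : ℤ) = j₁ - j₀ := Int.toNat_of_nonneg (by omega)
  omega
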